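/- Let q be a prime power with gcd(q,3)=1, i.e. q coprime to 3, and let α > β be positive integers. If gcd(α+β, q+1)=1, then the polynomial X^α + X^β + 1 has no roots in the set μ_{q+1} = {a ∈ F_{q^2}^* : a^{q+1} = 1}. -/
import Mathlib


/-- If `q` is a prime power coprime to 3, `α > β > 0`, and `gcd(α+β, q+1) = 1`,
then `X^α + X^β + 1` has no roots in `μ_{q+1} ⊆ F_{q^2}^*`. -/
theorem stmt_0 (q α β : ℕ) (hq3 : Nat.Coprime q 3)
    (p n : ℕ) (hp : p.Prime) (hn : 0 < n) (hqpn : q = p ^ n)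
    (hβ : 0 < β) (hαβ : β < α)
    (hgcd : Nat.gcd (α + β) (q + 1) = 1)
    (F : Type*) [Field F] [Fintype F] (hF : Fintype.card F = q ^ 2)
    (a : F) (ha : a ≠ 0) (hμ : a ^ (q + 1) = 1) :
    a ^ α + a ^ β + 1 ≠ 0 := by
  intro h
  -- char F = p
  have hcharP : CharP F p := by
    set r := ringChar F with hr
    have hrF : CharP F r := ringChar.charP F
    have hrprime : r.Prime := CharP.char_is_prime F r
    obtain ⟨m, hm, hcard⟩ := FiniteField.card F r
    have : p ^ (2 * n) = r ^ (m : ℕ) := by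
      rw [hqpn, ← pow_mul, mul_comm] at hF; rw [← hF, hcard]
    have hpr : p = r := by
      have : p ∣ r ^ (m : ℕ) := this ▸ dvd_pow_self p (by omega)
      exact ((Nat.prime_dvd_prime_iff_eq hp hrprime).mp (hp.dvd_of_dvd_pow this))
    rwa [hpr]
  haveI := hcharP
  haveI : Fact p.Prime := ⟨hp⟩
  -- Frobenius
  have hfrob : a ^ (α * q) + a ^ (β * q) + 1 = 0 := by
    have := congrArg (· ^ q) h
    simp only [hqpn] at this ⊢
    rw [add_pow_char_pow, add_pow_char_pow, one_pow, zero_pow (by simp [hqpn, hp.pos.ne', hn.ne'] : p ^ n ≠ 0),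
      ← pow_mul, ← pow_mul] at this
    exact this
  -- a^(α+β) = 1
  have key : ∀ k : ℕ, a ^ (k * q) * a ^ k = 1 := by
    intro k
    rw [← pow_add, show k * q + k = (q + 1) * k by ring, pow_mul, hμ, one_pow]
  have hab : a ^ (α + β) = 1 := by
    have := congrArg (· * (a ^ α * a ^ β)) hfrob
    simp only [zero_mul, add_mul] at this
    have e1 : a ^ (α * q) * (a ^ α * a ^ β) = a ^ β := by
      rw [← mul_assoc, key, one_mul]
    have e2 : a ^ (β * q) * (a ^ α * a ^ β) = a ^ α := by
      rw [mul_comm (a^α), ← mul_assoc, key, one_mul]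
    rw [e1, e2, one_mul] at this
    have : a ^ α * a ^ β = -(a ^ α + a ^ β) := by linear_combination this
    rw [pow_add, this]
    have : a ^ α + a ^ β = -1 := by linear_combination h
    rw [this]; ring
  -- a = 1
  have ha1 : a = 1 := by
    have d1 : orderOf a ∣ α + β := orderOf_dvd_of_pow_eq_one hab
    have d2 : orderOf a ∣ q + 1 := orderOf_dvd_of_pow_eq_one hμ
    have : orderOf a ∣ 1 := hgcd ▸ Nat.dvd_gcd d1 d2
    exact orderOf_eq_one_iff.mp (Nat.eq_one_of_dvd_one this)
  rw [ha1] at h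
  simp only [one_pow] at h
  have h3 : (3 : F) = 0 := by linear_combination h
  have hp3 : p ∣ 3 := by
    have := (CharP.cast_eq_zero_iff F p 3).mp (by exact_mod_cast h3)
    exact this
  have hpq : p ∣ q := hqpn ▸ dvd_pow_self p (by omega)
  have : p ∣ Nat.gcd q 3 := Nat.dvd_gcd hpq hp3
  rw [hq3] at this
  exact hp.one_lt.ne' (Nat.eq_one_of_dvd_one this)
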